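/- Apparent impedance for the phase a-to-phase b fault loop: let v_La, v_Lb, i_La, i_Lb, i_Ra, i_Rb ∈ ℂ be fault-time quantities and primed symbols their prefault values. Let m_T, m_F, r_F be real and z ∈ ℂ. Suppose fault-loop KVL holds: v_La − v_Lb = m_T·z·(i_La − i_Lb) + m_F·r_F·i_F, where i_F = i_La + i_Ra = −(i_Lb + i_Rb); suppose the prefault fault current is zero on both phases (i_La' + i_Ra' = 0 and i_Lb' + i_Rb' = 0); and suppose the apparent current i_A := i_La − i_Lb ≠ 0. Then (v_La − v_Lb) / i_A = m_T·z + (m_F·r_F/2) · ( ((i_La − i_La') − (i_Lb − i_Lb')) + ((i_Ra − i_Ra') − (i_Rb − i_Rb')) ) / i_A; i.e., the apparent impedance equals m_T·z plus half the fault resistance times the sum of the incremental apparent local and incremental apparent remote currents, divided by the apparent current. -/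

import Mathlib

/-- **Apparent impedance for the phase a-to-phase b fault loop.**
Under the fault-loop KVL, zero prefault fault current on both phases, and
nonzero apparent current, the apparent impedance equals `m_T·z` plus half the
fault resistance times the sum of the incremental apparent local and
incremental apparent remote currents, divided by the apparent current. -/
theorem apparent_impedance_ab
    (v_La v_Lb i_La i_Lb i_Ra i_Rb i_La' i_Lb' i_Ra' i_Rb' i_F : ℂ)
    (m_T m_F r_F : ℝ) (z : ℂ)
    (hKVL : v_La - v_Lb = (m_T : ℂ) * z * (i_La - i_Lb) + (m_F : ℂ) * (r_F : ℂ) * i_F)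
    (hFa : i_F = i_La + i_Ra)
    (hFb : i_F = -(i_Lb + i_Rb))
    (hpa : i_La' + i_Ra' = 0)
    (hpb : i_Lb' + i_Rb' = 0)
    (hA : i_La - i_Lb ≠ 0) :
    (v_La - v_Lb) / (i_La - i_Lb) =
      (m_T : ℂ) * z + ((m_F : ℂ) * (r_F : ℂ) / 2) *
        (((i_La - i_La') - (i_Lb - i_Lb')) + ((i_Ra - i_Ra') - (i_Rb - i_Rb')))
        / (i_La - i_Lb) := by
  have h2 : (2 : ℂ) * i_F = (i_La + i_Ra) - (i_Lb + i_Rb) := by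
    rw [two_mul]; nth_rewrite 1 [hFa]; rw [hFb]; ring
  rw [hKVL]
  field_simp
  linear_combination ((m_F : ℂ) * r_F) * h2
    + ((m_F : ℂ) * r_F) * hpa
    - ((m_F : ℂ) * r_F) * hpb
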